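/- arXiv:1105.5285 — 6 statements merged into one kernel-verified Lean document; each statement's English description precedes it below -/
import Mathlib

section
/- For any f, g ∈ H, define u₁(t) = e^{t−a} · (i f + g)/√2 for t ≤ a and u₂(t) = e^{b−t} · (i f − g)/√2 for t ≥ b. Then u₁ and its derivative belong to L²((-∞, a]; H), u₂ and its derivative belong to L²([b, +∞); H), and the boundary maps γ₁(u) = (1/(i√2))(u₁(a) + u₂(b)), γ₂(u) = (1/√2)(u₁(a) − u₂(b)) satisfy γ₁(u) = f and γ₂(u) = g. In particular, the pair map u ↦ (γ₁(u), γ₂(u)) is surjective onto H × H (the surjectivity part of Theorem 2.1). -/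
open MeasureTheory Set Complex
open scoped InnerProductSpace

/-- First boundary map: `γ₁(u) = (1/(i√2)) (u₁(a) + u₂(b))`. -/
noncomputable def gamma1 {H : Type*} [NormedAddCommGroup H] [InnerProductSpace ℂ H]
    (a b : ℝ) (u₁ u₂ : ℝ → H) : H :=
  (Complex.I * (Real.sqrt 2 : ℂ))⁻¹ • (u₁ a + u₂ b)

/-- Second boundary map: `γ₂(u) = (1/√2) (u₁(a) − u₂(b))`. -/
noncomputable def gamma2 {H : Type*} [NormedAddCommGroup H] [InnerProductSpace ℂ H]
    (a b : ℝ) (u₁ u₂ : ℝ → H) : H :=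
  ((Real.sqrt 2 : ℂ))⁻¹ • (u₁ a - u₂ b)

section Aux
open Filter
lemma expsq_Iic (c d : ℝ) : IntegrableOn (fun t => Real.exp (2 * t + d)) (Iic c) := by
  have hderiv : ∀ x : ℝ, HasDerivAt (fun t => Real.exp (2 * t + d) / 2)
      (Real.exp (2 * x + d)) x := by
    intro x
    have h1 : HasDerivAt (fun t : ℝ => 2 * t + d) 2 x := by
      simpa using ((hasDerivAt_id x).const_mul 2).add_const d
    have := ((Real.hasDerivAt_exp (2 * x + d)).comp x h1).div_const 2
    exact this.congr_deriv (by ring)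
  have hcont : Continuous fun t : ℝ => Real.exp (2 * t + d) :=
    Real.continuous_exp.comp (by continuity)
  refine integrableOn_Iic_of_intervalIntegral_norm_bounded
    (Real.exp (2 * c + d) / 2) c (fun y => (hcont.intervalIntegrable _ _).1)
    tendsto_id (Eventually.of_forall fun y => ?_)
  have h := intervalIntegral.integral_eq_sub_of_hasDerivAt
    (f := fun t => Real.exp (2 * t + d) / 2) (a := y) (b := c)
    (fun x _ => hderiv x) (hcont.intervalIntegrable _ _)
  simp only [id_eq, Real.norm_eq_abs, Real.abs_exp]
  rw [h]
  have := (Real.exp_pos (2 * y + d)).le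
  linarith

lemma expsq_Ici (c d : ℝ) : IntegrableOn (fun t => Real.exp (-2 * t + d)) (Ici c) := by
  rw [integrableOn_Ici_iff_integrableOn_Ioi]
  have hderiv : ∀ x : ℝ, HasDerivAt (fun t => -(Real.exp (-2 * t + d) / 2))
      (Real.exp (-2 * x + d)) x := by
    intro x
    have h1 : HasDerivAt (fun t : ℝ => -2 * t + d) (-2) x := by
      simpa using ((hasDerivAt_id x).const_mul (-2)).add_const d
    have := (((Real.hasDerivAt_exp (-2 * x + d)).comp x h1).div_const 2).neg
    exact this.congr_deriv (by ring)
  have hcont : Continuous fun t : ℝ => Real.exp (-2 * t + d) :=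
    Real.continuous_exp.comp (by continuity)
  refine integrableOn_Ioi_of_intervalIntegral_norm_bounded
    (Real.exp (-2 * c + d) / 2) c (fun y => (hcont.intervalIntegrable _ _).1)
    tendsto_id (Eventually.of_forall fun y => ?_)
  have h := intervalIntegral.integral_eq_sub_of_hasDerivAt
    (f := fun t => -(Real.exp (-2 * t + d) / 2)) (a := c) (b := y)
    (fun x _ => hderiv x) (hcont.intervalIntegrable _ _)
  simp only [id_eq, Real.norm_eq_abs, Real.abs_exp]
  rw [h]
  have := (Real.exp_pos (-2 * y + d)).le
  linarith

variable {H : Type*} [NormedAddCommGroup H] [InnerProductSpace ℂ H]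

lemma memLp_left (a : ℝ) (v : H) :
    MemLp (fun t => Real.exp (t - a) • v) 2 (volume.restrict (Iic a)) := by
  have hcont : Continuous fun t : ℝ => Real.exp (t - a) • v :=
    (Real.continuous_exp.comp (by continuity)).smul continuous_const
  rw [memLp_two_iff_integrable_sq_norm hcont.aestronglyMeasurable]
  have : Integrable (fun t => Real.exp (2 * t + (-2 * a)) * ‖v‖ ^ 2)
      (volume.restrict (Iic a)) := (expsq_Iic a (-2 * a)).mul_const _
  refine this.congr (Eventually.of_forall fun t => ?_)
  simp only [norm_smul, Real.norm_eq_abs, Real.abs_exp, mul_pow, ← Real.exp_nat_mul]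
  ring_nf

lemma memLp_right (b : ℝ) (v : H) :
    MemLp (fun t => Real.exp (b - t) • v) 2 (volume.restrict (Ici b)) := by
  have hcont : Continuous fun t : ℝ => Real.exp (b - t) • v :=
    (Real.continuous_exp.comp (by continuity)).smul continuous_const
  rw [memLp_two_iff_integrable_sq_norm hcont.aestronglyMeasurable]
  have : Integrable (fun t => Real.exp (-2 * t + 2 * b) * ‖v‖ ^ 2)
      (volume.restrict (Ici b)) := (expsq_Ici b (2 * b)).mul_const _
  refine this.congr (Eventually.of_forall fun t => ?_)
  simp only [norm_smul, Real.norm_eq_abs, Real.abs_exp, mul_pow, ← Real.exp_nat_mul]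
  ring_nf

lemma deriv_left (a : ℝ) (v : H) :
    deriv (fun t => Real.exp (t - a) • v) = fun t => Real.exp (t - a) • v := by
  funext t
  have h1 : HasDerivAt (fun t : ℝ => Real.exp (t - a)) (Real.exp (t - a)) t := by
    simpa [Function.comp_def] using (Real.hasDerivAt_exp (t - a)).comp t ((hasDerivAt_id t).sub_const a)
  exact (h1.smul_const v).deriv

lemma deriv_right (b : ℝ) (v : H) :
    deriv (fun t => Real.exp (b - t) • v) = fun t => -(Real.exp (b - t) • v) := by
  funext t
  have h1 : HasDerivAt (fun t : ℝ => Real.exp (b - t)) (-Real.exp (b - t)) t := by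
    simpa [Function.comp_def] using (Real.hasDerivAt_exp (b - t)).comp t ((hasDerivAt_id t).const_sub b)
  have := h1.smul_const v
  simpa using this.deriv

lemma sqrt2_ne : ((Real.sqrt 2 : ℝ) : ℂ) ≠ 0 := by
  norm_cast
  positivity

lemma sqrt2_sq : ((Real.sqrt 2 : ℝ) : ℂ) * ((Real.sqrt 2 : ℝ) : ℂ) = 2 := by
  norm_cast
  rw [Real.mul_self_sqrt (by norm_num)]

lemma gammas (a b : ℝ) (f g : H) :
    gamma1 a b (fun t => Real.exp (t - a) • ((Real.sqrt 2 : ℂ))⁻¹ • (Complex.I • f + g))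
      (fun t => Real.exp (b - t) • ((Real.sqrt 2 : ℂ))⁻¹ • (Complex.I • f - g)) = f
    ∧ gamma2 a b (fun t => Real.exp (t - a) • ((Real.sqrt 2 : ℂ))⁻¹ • (Complex.I • f + g))
      (fun t => Real.exp (b - t) • ((Real.sqrt 2 : ℂ))⁻¹ • (Complex.I • f - g)) = g := by
  have h2 := sqrt2_sq
  have hne := sqrt2_ne
  constructor
  · simp only [gamma1, sub_self, Real.exp_zero, one_smul]
    match_scalars <;> field_simp
    linear_combination -h2
    ring
  · simp only [gamma2, sub_self, Real.exp_zero, one_smul]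
    match_scalars <;> field_simp
    linear_combination
    linear_combination -h2

end Aux

/-- Surjectivity part of Theorem 2.1: for any `f, g ∈ H` the explicit functions
`u₁(t) = e^{t−a} (i f + g)/√2` and `u₂(t) = e^{b−t} (i f − g)/√2` lie (with their
derivatives) in the corresponding `L²` spaces and realize the boundary values
`γ₁(u) = f`, `γ₂(u) = g`; in particular `u ↦ (γ₁(u), γ₂(u))` is onto `H × H`. -/
theorem boundary_maps_surjective
    {H : Type*} [NormedAddCommGroup H] [InnerProductSpace ℂ H] [CompleteSpace H]
    (a b : ℝ) (hab : a < b) (f g : H)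
    (u₁ u₂ : ℝ → H)
    (hu₁def : u₁ = fun t => Real.exp (t - a) • ((Real.sqrt 2 : ℂ))⁻¹ • (Complex.I • f + g))
    (hu₂def : u₂ = fun t => Real.exp (b - t) • ((Real.sqrt 2 : ℂ))⁻¹ • (Complex.I • f - g)) :
    MemLp u₁ 2 (volume.restrict (Set.Iic a))
    ∧ MemLp (deriv u₁) 2 (volume.restrict (Set.Iic a))
    ∧ MemLp u₂ 2 (volume.restrict (Set.Ici b))
    ∧ MemLp (deriv u₂) 2 (volume.restrict (Set.Ici b))
    ∧ gamma1 a b u₁ u₂ = f ∧ gamma2 a b u₁ u₂ = g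
    ∧ (∀ F₁ F₂ : H, ∃ w₁ w₂ : ℝ → H,
        MemLp w₁ 2 (volume.restrict (Set.Iic a))
        ∧ MemLp (deriv w₁) 2 (volume.restrict (Set.Iic a))
        ∧ MemLp w₂ 2 (volume.restrict (Set.Ici b))
        ∧ MemLp (deriv w₂) 2 (volume.restrict (Set.Ici b))
        ∧ gamma1 a b w₁ w₂ = F₁ ∧ gamma2 a b w₁ w₂ = F₂) := by
  subst hu₁def hu₂def
  obtain ⟨hγ₁, hγ₂⟩ := gammas a b f g
  refine ⟨memLp_left a _, ?_, memLp_right b _, ?_, hγ₁, hγ₂, ?_⟩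
  · rw [deriv_left]
    exact memLp_left a _
  · rw [deriv_right]
    exact (memLp_right b _).neg
  · intro F₁ F₂
    obtain ⟨h1, h2⟩ := gammas a b F₁ F₂
    exact ⟨_, _, memLp_left a _, by rw [deriv_left]; exact memLp_left a _,
      memLp_right b _, by rw [deriv_right]; exact (memLp_right b _).neg, h1, h2⟩
end

section
/- (Theorem 3.1, bounded-coefficient form.) Let W : H → H be a unitary operator and λ ∈ ℝ. Suppose u₁ : ℝ → H is differentiable on (-∞, a] with i u₁'(t) + A u₁(t) = λ u₁(t) for all t ≤ a, u₂ : ℝ → H is differentiable on [b, +∞) with i u₂'(t) + A u₂(t) = λ u₂(t) for all t ≥ b, u₁ ∈ L²((-∞, a]; H), u₂ ∈ L²([b, +∞); H), and u₂(b) = W u₁(a). Then u₁(t) = 0 for all t ≤ a and u₂(t) = 0 for all t ≥ b; i.e., the boundary value problem has no nonzero L² eigenfunctions for any real λ. -/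
open MeasureTheory Set Complex
open scoped InnerProductSpace

lemma normSq_deriv_zero
    {H : Type*} [NormedAddCommGroup H] [InnerProductSpace ℂ H] [CompleteSpace H]
    (A : H →L[ℂ] H) (hA : IsSelfAdjoint A) (lam : ℝ) {s : Set ℝ} {u u' : ℝ → H} {x : ℝ}
    (hd : HasDerivWithinAt u (u' x) s x)
    (heq : Complex.I • u' x + A (u x) = (lam : ℂ) • u x) :
    HasDerivWithinAt (fun t => (⟪u t, u t⟫_ℂ)) 0 s x := by
  have h := hd.inner ℂ hd
  have hu' : u' x = Complex.I • (A (u x) - (lam : ℂ) • u x) := by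
    have : Complex.I • u' x = (lam : ℂ) • u x - A (u x) := by
      rw [← heq]; abel
    calc u' x = (-Complex.I) • (Complex.I • u' x) := by
          rw [smul_smul]; norm_num
      _ = Complex.I • (A (u x) - (lam : ℂ) • u x) := by
          rw [this]; module
  have hsym : ⟪u x, A (u x)⟫_ℂ = ⟪A (u x), u x⟫_ℂ := by
    rw [← ContinuousLinearMap.adjoint_inner_left, hA.adjoint_eq]
  have hzero : (⟪u x, u' x⟫_ℂ + ⟪u' x, u x⟫_ℂ) = 0 := by
    rw [hu', inner_smul_right, inner_smul_left, inner_sub_right, inner_sub_left,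
      inner_smul_right, inner_smul_left, hsym]
    have : (starRingEnd ℂ) (lam : ℂ) = (lam : ℂ) := by simp
    rw [this, Complex.conj_I]
    ring
  rw [← hzero]
  exact h

lemma normSq_const_Iic
    {H : Type*} [NormedAddCommGroup H] [InnerProductSpace ℂ H] [CompleteSpace H]
    (A : H →L[ℂ] H) (hA : IsSelfAdjoint A) (lam : ℝ) {a : ℝ} {u u' : ℝ → H}
    (hd : ∀ t ∈ Set.Iic a, HasDerivWithinAt u (u' t) (Set.Iic a) t)
    (heq : ∀ t ∈ Set.Iic a, Complex.I • u' t + A (u t) = (lam : ℂ) • u t) :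
    ∀ t ∈ Set.Iic a, ⟪u t, u t⟫_ℂ = ⟪u a, u a⟫_ℂ := by
  intro t ht
  have key : ∀ x ∈ Set.Iic a,
      HasDerivWithinAt (fun s => (⟪u s, u s⟫_ℂ)) 0 (Set.Iic a) x :=
    fun x hx => normSq_deriv_zero A hA lam (hd x hx) (heq x hx)
  have hcont : ContinuousOn (fun s => (⟪u s, u s⟫_ℂ)) (Set.Icc t a) :=
    fun x hx => ((key x hx.2).continuousWithinAt).mono (fun y hy => hy.2)
  have hder : ∀ x ∈ Set.Ico t a,
      HasDerivWithinAt (fun s => (⟪u s, u s⟫_ℂ)) 0 (Set.Ici x) x := by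
    intro x hx
    exact ((key x (le_of_lt hx.2)).hasDerivAt (Iic_mem_nhds hx.2)).hasDerivWithinAt
  have := constant_of_has_deriv_right_zero hcont hder a (Set.right_mem_Icc.2 ht)
  exact this.symm

lemma normSq_const_Ici
    {H : Type*} [NormedAddCommGroup H] [InnerProductSpace ℂ H] [CompleteSpace H]
    (A : H →L[ℂ] H) (hA : IsSelfAdjoint A) (lam : ℝ) {b : ℝ} {u u' : ℝ → H}
    (hd : ∀ t ∈ Set.Ici b, HasDerivWithinAt u (u' t) (Set.Ici b) t)
    (heq : ∀ t ∈ Set.Ici b, Complex.I • u' t + A (u t) = (lam : ℂ) • u t) :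
    ∀ t ∈ Set.Ici b, ⟪u t, u t⟫_ℂ = ⟪u b, u b⟫_ℂ := by
  intro t ht
  have key : ∀ x ∈ Set.Ici b,
      HasDerivWithinAt (fun s => (⟪u s, u s⟫_ℂ)) 0 (Set.Ici b) x :=
    fun x hx => normSq_deriv_zero A hA lam (hd x hx) (heq x hx)
  have hcont : ContinuousOn (fun s => (⟪u s, u s⟫_ℂ)) (Set.Icc b t) :=
    fun x hx => ((key x hx.1).continuousWithinAt).mono (fun y hy => hy.1)
  have hder : ∀ x ∈ Set.Ico b t,
      HasDerivWithinAt (fun s => (⟪u s, u s⟫_ℂ)) 0 (Set.Ici x) x := by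
    intro x hx
    exact (key x hx.1).mono (Set.Ici_subset_Ici.2 hx.1)
  have := constant_of_has_deriv_right_zero hcont hder t (Set.right_mem_Icc.2 ht)
  exact this

/-- Theorem 3.1 (bounded-coefficient form): for a unitary `W` and real `λ`, the boundary
value problem `i u' + A u = λ u` on `(-∞, a] ∪ [b, +∞)` with `u₂(b) = W u₁(a)` has no
nonzero `L²` eigenfunctions. -/
theorem pointSpectrum_empty
    {H : Type*} [NormedAddCommGroup H] [InnerProductSpace ℂ H] [CompleteSpace H]
    (A : H →L[ℂ] H) (hA : IsSelfAdjoint A) (a b : ℝ) (hab : a < b)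
    (W : H →L[ℂ] H) (hWiso : ∀ x : H, ‖W x‖ = ‖x‖) (hWsurj : Function.Surjective W)
    (lam : ℝ) (u₁ u₁' u₂ u₂' : ℝ → H)
    (hu₁deriv : ∀ t ∈ Set.Iic a, HasDerivWithinAt u₁ (u₁' t) (Set.Iic a) t)
    (hu₁eq : ∀ t ∈ Set.Iic a, Complex.I • u₁' t + A (u₁ t) = (lam : ℂ) • u₁ t)
    (hu₂deriv : ∀ t ∈ Set.Ici b, HasDerivWithinAt u₂ (u₂' t) (Set.Ici b) t)
    (hu₂eq : ∀ t ∈ Set.Ici b, Complex.I • u₂' t + A (u₂ t) = (lam : ℂ) • u₂ t)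
    (hu₁L2 : MemLp u₁ 2 (volume.restrict (Set.Iic a)))
    (hu₂L2 : MemLp u₂ 2 (volume.restrict (Set.Ici b)))
    (hbc : u₂ b = W (u₁ a)) :
    (∀ t ∈ Set.Iic a, u₁ t = 0) ∧ (∀ t ∈ Set.Ici b, u₂ t = 0) := by
  have hc1 := normSq_const_Iic A hA lam hu₁deriv hu₁eq
  have hc2 := normSq_const_Ici A hA lam hu₂deriv hu₂eq
  -- norms are constant
  have hn1 : ∀ t ∈ Set.Iic a, ‖u₁ t‖ ^ 2 = ‖u₁ a‖ ^ 2 := by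
    intro t ht
    have := hc1 t ht
    have h1 : (⟪u₁ t, u₁ t⟫_ℂ) = (‖u₁ t‖ : ℂ) ^ 2 := inner_self_eq_norm_sq_to_K _
    have h2 : (⟪u₁ a, u₁ a⟫_ℂ) = (‖u₁ a‖ : ℂ) ^ 2 := inner_self_eq_norm_sq_to_K _
    rw [h1, h2] at this
    exact_mod_cast this
  -- u₁ a = 0 from L² and infinite measure
  have hInt : Integrable (fun t => ‖u₁ t‖ ^ 2) (volume.restrict (Set.Iic a)) :=
    (memLp_two_iff_integrable_sq_norm hu₁L2.aestronglyMeasurable).1 hu₁L2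
  have hae : (fun t => ‖u₁ t‖ ^ 2) =ᵐ[volume.restrict (Set.Iic a)]
      (fun _ => ‖u₁ a‖ ^ 2) := by
    filter_upwards [ae_restrict_mem measurableSet_Iic] with t ht
    exact hn1 t ht
  have hIntConst : Integrable (fun _ : ℝ => ‖u₁ a‖ ^ 2) (volume.restrict (Set.Iic a)) :=
    hInt.congr hae
  have hconst := integrable_const_iff.1 hIntConst
  have ha0 : ‖u₁ a‖ ^ 2 = 0 := by
    rcases hconst with h | h
    · exact h
    · exfalso
      have h := h.measure_univ_lt_top
      rw [Measure.restrict_apply_univ, Real.volume_Iic] at h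
      exact (lt_irrefl _ h)
  have hu₁a : u₁ a = 0 := by
    have : ‖u₁ a‖ = 0 := by nlinarith [norm_nonneg (u₁ a)]
    simpa using this
  constructor
  · intro t ht
    have := hn1 t ht
    rw [ha0] at this
    have : ‖u₁ t‖ = 0 := by nlinarith [norm_nonneg (u₁ t)]
    simpa using this
  · intro t ht
    have hb0 : u₂ b = 0 := by rw [hbc, hu₁a, map_zero]
    have := hc2 t ht
    rw [hb0] at this
    simp only [inner_zero_right] at this
    have h1 : (⟪u₂ t, u₂ t⟫_ℂ) = (‖u₂ t‖ : ℂ) ^ 2 := inner_self_eq_norm_sq_to_K _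
    rw [h1] at this
    have : ‖u₂ t‖ ^ 2 = 0 := by exact_mod_cast this
    have : ‖u₂ t‖ = 0 := by nlinarith [norm_nonneg (u₂ t)]
    simpa using this
end

section
/- Let λ ∈ ℂ with λ_i = Im λ > 0, and let f ∈ L²([b, +∞); H). Then the function s ↦ e^{−iλ(b−s)} · exp(i(b−s)A) f(s) is Bochner integrable on (b, +∞), and ‖ ∫_b^{∞} e^{−iλ(b−s)} exp(i(b−s)A) f(s) ds ‖² ≤ (1/(2λ_i)) ∫_b^{∞} ‖f(s)‖² ds. -/
set_option maxHeartbeats 1000000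
set_option synthInstance.maxHeartbeats 400000

open MeasureTheory Set Complex
open scoped InnerProductSpace

/-- The operator exponential `exp(iτA)` for a bounded operator `A` and `τ ∈ ℝ`. -/
noncomputable def expIA {H : Type*} [NormedAddCommGroup H] [InnerProductSpace ℂ H]
    [CompleteSpace H] (A : H →L[ℂ] H) (τ : ℝ) : H →L[ℂ] H :=
  NormedSpace.exp ((Complex.I * (τ : ℂ)) • A)

lemma expIA_mem_unitary {H : Type*} [NormedAddCommGroup H] [InnerProductSpace ℂ H]
    [CompleteSpace H] (A : H →L[ℂ] H) (hA : IsSelfAdjoint A) (τ : ℝ) :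
    expIA A τ ∈ unitary (H →L[ℂ] H) := by
  have h1 : IsSelfAdjoint ((τ : ℂ) • A) := by
    have h : star ((τ : ℂ) • A) = (τ : ℂ) • A := by
      rw [star_smul, hA.star_eq, Complex.star_def, Complex.conj_ofReal]
    exact h
  have h2 : NormedSpace.exp (Complex.I • ((τ : ℂ) • A)) ∈ unitary (H →L[ℂ] H) :=
    (selfAdjoint.expUnitary (⟨(τ : ℂ) • A, h1⟩ : selfAdjoint (H →L[ℂ] H))).prop
  have h3 : Complex.I • ((τ : ℂ) • A) = (Complex.I * (τ : ℂ)) • A := smul_smul _ _ _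
  rw [expIA, ← h3]
  exact h2

lemma expIA_norm_apply {H : Type*} [NormedAddCommGroup H] [InnerProductSpace ℂ H]
    [CompleteSpace H] (A : H →L[ℂ] H) (hA : IsSelfAdjoint A) (τ : ℝ) (x : H) :
    ‖expIA A τ x‖ = ‖x‖ :=
  ContinuousLinearMap.norm_map_of_mem_unitary (expIA_mem_unitary A hA τ) x

lemma exp_sq' (y : ℝ) : Real.exp y ^ 2 = Real.exp (2 * y) := by
  rw [← Real.exp_nat_mul]; norm_num

lemma integral_exp_decay_Ioi (b : ℝ) {a : ℝ} (ha : 0 < a) :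
    ∫ s in Set.Ioi b, Real.exp (-a * (s - b)) = 1 / a := by
  have hderiv : ∀ x ∈ Set.Ioi b,
      HasDerivAt (fun s => -(1 / a) * Real.exp (-a * (s - b)))
        (Real.exp (-a * (x - b))) x := by
    intro x _
    have h1 : HasDerivAt (fun s : ℝ => -a * (s - b)) (-a) x := by
      simpa using ((hasDerivAt_id x).sub_const b).const_mul (-a)
    have h2 := h1.exp
    have h3 := h2.const_mul (-(1 / a))
    refine h3.congr_deriv ?_
    have ha' := ha.ne'
    field_simp
  have hint : IntegrableOn (fun s => Real.exp (-a * (s - b))) (Set.Ioi b) := by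
    have h0 := (exp_neg_integrableOn_Ioi b ha).const_mul (Real.exp (a * b))
    apply h0.congr (Filter.Eventually.of_forall fun x => ?_)
    simp only [← Real.exp_add]
    congr 1
    ring
  have htend : Filter.Tendsto (fun s => -(1 / a) * Real.exp (-a * (s - b)))
      Filter.atTop (nhds 0) := by
    have h1 : Filter.Tendsto (fun s : ℝ => -a * (s - b)) Filter.atTop Filter.atBot := by
      apply Filter.Tendsto.const_mul_atTop_of_neg (neg_neg_iff_pos.mpr ha)
      exact Filter.tendsto_atTop_add_const_right _ (-b) Filter.tendsto_id
    have := (Real.tendsto_exp_atBot.comp h1).const_mul (-(1 / a))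
    simpa using this
  have hcont : ContinuousWithinAt (fun s => -(1 / a) * Real.exp (-a * (s - b)))
      (Set.Ici b) b := by
    apply Continuous.continuousWithinAt
    continuity
  have := MeasureTheory.integral_Ioi_of_hasDerivAt_of_tendsto hcont hderiv hint htend
  rw [this]
  simp

/-- For `Im λ > 0` and `f ∈ L²([b,∞); H)`, the function
`s ↦ e^{−iλ(b−s)} exp(i(b−s)A) f(s)` is Bochner integrable on `(b, ∞)` and
`‖∫_b^∞ e^{−iλ(b−s)} exp(i(b−s)A) f(s) ds‖² ≤ (1/(2 Im λ)) ∫_b^∞ ‖f(s)‖² ds`. -/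
theorem integral_bound_right_halfline
    {H : Type*} [NormedAddCommGroup H] [InnerProductSpace ℂ H] [CompleteSpace H]
    (A : H →L[ℂ] H) (hA : IsSelfAdjoint A) (b : ℝ) (lam : ℂ) (hlam : 0 < lam.im)
    (f : ℝ → H) (hf : MemLp f 2 (volume.restrict (Set.Ici b))) :
    IntegrableOn
      (fun s : ℝ => Complex.exp (-Complex.I * lam * ((b : ℂ) - (s : ℂ))) •
        (expIA A (b - s)) (f s)) (Set.Ioi b) volume
    ∧ ‖∫ s in Set.Ioi b, Complex.exp (-Complex.I * lam * ((b : ℂ) - (s : ℂ))) •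
          (expIA A (b - s)) (f s)‖ ^ 2
        ≤ (1 / (2 * lam.im)) * ∫ s in Set.Ioi b, ‖f s‖ ^ 2 := by
  set c : ℝ := lam.im with hc
  set μ : Measure ℝ := volume.restrict (Set.Ioi b) with hμ
  set F : ℝ → H := fun s : ℝ => Complex.exp (-Complex.I * lam * ((b : ℂ) - (s : ℂ))) •
      (expIA A (b - s)) (f s) with hF
  set g : ℝ → ℝ := fun s => Real.exp (-c * (s - b)) with hg
  -- f restricted to Ioi b
  have hf2 : MemLp f 2 μ :=
    hf.mono_measure (Measure.restrict_mono Set.Ioi_subset_Ici_self le_rfl)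
  -- norm identity
  have hnorm : ∀ s : ℝ, ‖F s‖ = g s * ‖f s‖ := by
    intro s
    rw [hF, norm_smul, expIA_norm_apply A hA, hg]
    congr 1
    rw [Complex.norm_exp]
    congr 1
    have : ((b : ℂ) - (s : ℂ)) = ((b - s : ℝ) : ℂ) := by push_cast; ring
    rw [this]
    simp [Complex.mul_re, Complex.mul_im]
    ring
  -- g is in L² on Ioi b
  have hgcont : Continuous g := by continuity
  have hgsq_int : Integrable (fun s => g s ^ 2) μ := by
    have h0 := (exp_neg_integrableOn_Ioi b (by positivity : (0:ℝ) < 2 * c)).const_mul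
      (Real.exp (2 * c * b))
    apply h0.congr (Filter.Eventually.of_forall fun x => ?_)
    simp only [hg, exp_sq', ← Real.exp_add]
    congr 1
    ring
  have hg2 : MemLp g 2 μ :=
    (memLp_two_iff_integrable_sq hgcont.aestronglyMeasurable).2 hgsq_int
  -- the product g * ‖f‖ is integrable
  have hmul : Integrable (fun s => g s * ‖f s‖) μ := by
    have := (hf2.norm.smul hg2 (r := 1) (hpqr := ⟨by
      rw [inv_one]
      exact ENNReal.inv_two_add_inv_two⟩))
    rw [memLp_one_iff_integrable] at this
    exact this
  -- measurability of F
  have hFmeas : AEStronglyMeasurable F μ := by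
    have hU : Continuous fun s : ℝ => expIA A (b - s) := by
      letI : NormedAlgebra ℚ (H →L[ℂ] H) := .restrictScalars ℚ ℂ _
      apply NormedSpace.exp_continuous.comp
      exact (continuous_const.mul
        (Complex.continuous_ofReal.comp (continuous_const.sub continuous_id))).smul
        continuous_const
    have happ : AEStronglyMeasurable (fun s => (expIA A (b - s)) (f s)) μ :=
      isBoundedBilinearMap_apply.continuous.comp_aestronglyMeasurable
        (hU.aestronglyMeasurable.prodMk hf2.1)
    exact ((Complex.continuous_exp.comp (by continuity)).aestronglyMeasurable).smul happ
  -- integrability of F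
  have hFint : Integrable F μ := by
    refine hmul.mono' hFmeas ?_
    filter_upwards with s
    rw [hnorm s]
  refine ⟨hFint, ?_⟩
  -- the quantitative bound
  have hS : Integrable (fun s => ‖f s‖ ^ 2) μ :=
    (memLp_two_iff_integrable_sq_norm hf2.1).1 hf2
  have hSnn : 0 ≤ ∫ s, ‖f s‖ ^ 2 ∂μ :=
    integral_nonneg fun s => sq_nonneg _
  have hgval : ∫ s, g s ^ 2 ∂μ = 1 / (2 * c) := by
    have h1 : ∀ s : ℝ, g s ^ 2 = Real.exp (-(2 * c) * (s - b)) := by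
      intro s
      rw [hg, exp_sq']
      congr 1
      ring
    calc ∫ s, g s ^ 2 ∂μ = ∫ s in Set.Ioi b, Real.exp (-(2 * c) * (s - b)) := by
          rw [hμ]; exact integral_congr_ae (Filter.Eventually.of_forall fun s => h1 s)
      _ = 1 / (2 * c) := integral_exp_decay_Ioi b (by positivity)
  -- Cauchy–Schwarz
  have hCS : ∫ s, g s * ‖f s‖ ∂μ ≤
      Real.sqrt (1 / (2 * c)) * Real.sqrt (∫ s, ‖f s‖ ^ 2 ∂μ) := by
    have hpq : Real.HolderConjugate 2 2 := Real.HolderConjugate.two_two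
    have h2 : ENNReal.ofReal (2 : ℝ) = 2 := by norm_num
    have hgnn : (0 : ℝ → ℝ) ≤ᶠ[ae μ] g := Filter.Eventually.of_forall fun s => (Real.exp_pos _).le
    have hfnn : (0 : ℝ → ℝ) ≤ᶠ[ae μ] fun s => ‖f s‖ := Filter.Eventually.of_forall fun s => norm_nonneg _
    have hg2' : MemLp g (ENNReal.ofReal 2) μ := by rw [h2]; exact hg2
    have hf2' : MemLp (fun s => ‖f s‖) (ENNReal.ofReal 2) μ := by rw [h2]; exact hf2.norm
    have := MeasureTheory.integral_mul_le_Lp_mul_Lq_of_nonneg hpq hgnn hfnn hg2' hf2'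
    calc ∫ s, g s * ‖f s‖ ∂μ
        ≤ (∫ s, g s ^ (2:ℝ) ∂μ) ^ ((1:ℝ)/2) * (∫ s, ‖f s‖ ^ (2:ℝ) ∂μ) ^ ((1:ℝ)/2) := this
      _ = Real.sqrt (1 / (2 * c)) * Real.sqrt (∫ s, ‖f s‖ ^ 2 ∂μ) := by
          rw [← Real.sqrt_eq_rpow, ← Real.sqrt_eq_rpow]
          congr 2
          · rw [← hgval]
            exact integral_congr_ae (Filter.Eventually.of_forall fun s => by
              show g s ^ (2 : ℝ) = g s ^ (2 : ℕ)
              rw [← Real.rpow_natCast (g s) 2]; norm_num)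
          · exact integral_congr_ae (Filter.Eventually.of_forall fun s => by
              show ‖f s‖ ^ (2 : ℝ) = ‖f s‖ ^ (2 : ℕ)
              rw [← Real.rpow_natCast (‖f s‖) 2]; norm_num)
  have hbound : ‖∫ s, F s ∂μ‖ ≤ Real.sqrt (1 / (2 * c)) * Real.sqrt (∫ s, ‖f s‖ ^ 2 ∂μ) := by
    calc ‖∫ s, F s ∂μ‖ ≤ ∫ s, ‖F s‖ ∂μ := norm_integral_le_integral_norm F
      _ = ∫ s, g s * ‖f s‖ ∂μ :=
          integral_congr_ae (Filter.Eventually.of_forall fun s => hnorm s)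
      _ ≤ _ := hCS
  have hfinal : ‖∫ s, F s ∂μ‖ ^ 2 ≤ (1 / (2 * c)) * ∫ s, ‖f s‖ ^ 2 ∂μ := by
    have h1 : ‖∫ s, F s ∂μ‖ ^ 2 ≤
        (Real.sqrt (1 / (2 * c)) * Real.sqrt (∫ s, ‖f s‖ ^ 2 ∂μ)) ^ 2 :=
      pow_le_pow_left₀ (norm_nonneg _) hbound 2
    calc ‖∫ s, F s ∂μ‖ ^ 2 ≤
        (Real.sqrt (1 / (2 * c)) * Real.sqrt (∫ s, ‖f s‖ ^ 2 ∂μ)) ^ 2 := h1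
      _ = (1 / (2 * c)) * ∫ s, ‖f s‖ ^ 2 ∂μ := by
          rw [mul_pow, Real.sq_sqrt (by positivity), Real.sq_sqrt hSnn]
  exact hfinal
end

section
/- Let λ ∈ ℂ with λ_i = Im λ > 0 and f ∈ L²([b, +∞); H). Then for almost every t ≥ b the function s ↦ e^{−iλ(t−s)} exp(i(t−s)A) f(s) is Bochner integrable on (t, +∞), and the function u(t) = ∫_t^{∞} e^{−iλ(t−s)} exp(i(t−s)A) f(s) ds belongs to L²([b, +∞); H) with ‖u‖_{L²([b,∞);H)} ≤ (1/λ_i) ‖f‖_{L²([b,∞);H)}. -/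
open MeasureTheory Set Complex
open scoped InnerProductSpace

open NormedSpace
open scoped ENNReal NNReal

lemma real_int_exp_Ioi {d : ℝ} (hd : 0 < d) (t : ℝ) :
    ∫ s in Ioi t, Real.exp (d * (t - s)) = 1 / d := by
  have h1 : ∀ s : ℝ, Real.exp (d * (t - s)) = Real.exp (d * t) * Real.exp (-(d * s)) := by
    intro s; rw [← Real.exp_add]; ring_nf
  simp_rw [h1]
  rw [MeasureTheory.integral_const_mul]
  have h2 : ∫ s in Ioi t, Real.exp (-(d * s)) = d⁻¹ * Real.exp (-(d * t)) := by
    have := MeasureTheory.integral_comp_mul_left_Ioi (fun x => Real.exp (-x)) t hd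
    simp only [smul_eq_mul] at this
    rw [this, integral_exp_neg_Ioi]
  rw [h2, mul_comm (d⁻¹), ← mul_assoc, ← Real.exp_add]
  simp [one_div]

lemma integrableOn_exp_Ioi {d : ℝ} (hd : 0 < d) (t : ℝ) :
    IntegrableOn (fun s => Real.exp (d * (t - s))) (Ioi t) := by
  have h1 : ∀ s : ℝ, Real.exp (d * (t - s)) = Real.exp (d * t) * Real.exp (-d * s) := by
    intro s; rw [← Real.exp_add]; ring_nf
  simp_rw [h1]
  exact (exp_neg_integrableOn_Ioi t hd).const_mul _

lemma lint_exp_Ioi {d : ℝ} (hd : 0 < d) (t : ℝ) :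
    ∫⁻ s in Ioi t, ENNReal.ofReal (Real.exp (d * (t - s))) = ENNReal.ofReal (1 / d) := by
  rw [← ofReal_integral_eq_lintegral_ofReal (integrableOn_exp_Ioi hd t)
    (Filter.Eventually.of_forall fun s => (Real.exp_pos _).le), real_int_exp_Ioi hd t]

lemma lint_exp_Iio {d : ℝ} (hd : 0 < d) (s : ℝ) :
    ∫⁻ t in Iio s, ENNReal.ofReal (Real.exp (d * (t - s))) = ENNReal.ofReal (1 / d) := by
  have hmap : Measure.map Neg.neg (volume : Measure ℝ) = volume := Measure.map_neg_eq_self _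
  have hmeas : Measurable fun t : ℝ => ENNReal.ofReal (Real.exp (d * (t - s))) := by
    measurability
  calc ∫⁻ t in Iio s, ENNReal.ofReal (Real.exp (d * (t - s)))
      = ∫⁻ t in Iio s, ENNReal.ofReal (Real.exp (d * (t - s))) ∂(Measure.map Neg.neg volume) := by
        rw [hmap]
    _ = ∫⁻ r in Neg.neg ⁻¹' (Iio s), ENNReal.ofReal (Real.exp (d * (-r - s))) ∂volume := by
        rw [setLIntegral_map measurableSet_Iio hmeas measurable_neg]
    _ = ∫⁻ r in Ioi (-s), ENNReal.ofReal (Real.exp (d * (-s - r))) ∂volume := by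
        rw [Set.neg_preimage, Set.neg_Iio]
        congr 1; ext r; ring_nf
    _ = ENNReal.ofReal (1 / d) := lint_exp_Ioi hd (-s)

lemma expIA_norm {H : Type*} [NormedAddCommGroup H] [InnerProductSpace ℂ H]
    [CompleteSpace H] {A : H →L[ℂ] H} (hA : IsSelfAdjoint A) (τ : ℝ) (x : H) :
    ‖expIA A τ x‖ = ‖x‖ := by
  have hskew : (Complex.I * (τ : ℂ)) • A ∈ skewAdjoint (H →L[ℂ] H) := by
    rw [skewAdjoint.mem_iff, star_smul, hA.star_eq]
    simp [star, RCLike.star_def]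
    ring_nf
    rw [← neg_smul]
    congr 1
    simp [Complex.ext_iff]
  let +nondep : NormedAlgebra ℚ (H →L[ℂ] H) := .restrictScalars ℚ ℂ _
  have := exp_mem_unitary_of_mem_skewAdjoint hskew
  exact ContinuousLinearMap.norm_map_of_mem_unitary this x

lemma expIA_cont {H : Type*} [NormedAddCommGroup H] [InnerProductSpace ℂ H]
    [CompleteSpace H] (A : H →L[ℂ] H) : Continuous fun τ : ℝ => expIA A τ := by
  let +nondep : NormedAlgebra ℚ (H →L[ℂ] H) := .restrictScalars ℚ ℂ _
  exact exp_continuous.comp ((continuous_const.mul Complex.continuous_ofReal).smul continuous_const)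

lemma norm_integrand {H : Type*} [NormedAddCommGroup H] [InnerProductSpace ℂ H]
    [CompleteSpace H] {A : H →L[ℂ] H} (hA : IsSelfAdjoint A) (lam : ℂ) (f : ℝ → H)
    (t s : ℝ) :
    ‖Complex.exp (-Complex.I * lam * ((t : ℂ) - (s : ℂ))) • (expIA A (t - s)) (f s)‖
      = Real.exp (lam.im * (t - s)) * ‖f s‖ := by
  rw [norm_smul, Complex.norm_exp, expIA_norm hA]
  congr 2
  have : ((t : ℂ) - (s : ℂ)) = ((t - s : ℝ) : ℂ) := by push_cast; ring
  rw [this]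
  simp [Complex.mul_re, Complex.mul_im]

lemma ofReal_norm_eq_coe_nnnorm {E : Type*} [SeminormedAddCommGroup E] (a : E) :
    ENNReal.ofReal ‖a‖ = (‖a‖₊ : ℝ≥0∞) := ofReal_norm a

set_option synthInstance.maxHeartbeats 1000000 in
set_option maxHeartbeats 1600000 in
theorem key {H : Type*} [NormedAddCommGroup H] [InnerProductSpace ℂ H] [CompleteSpace H]
    (A : H →L[ℂ] H) (hA : IsSelfAdjoint A) (b : ℝ) (lam : ℂ) (hlam : 0 < lam.im)
    (f : ℝ → H) (hfm : StronglyMeasurable f) (hf : MemLp f 2 (volume.restrict (Set.Ici b))) :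
    (∀ t, b ≤ t → IntegrableOn (fun s : ℝ =>
        Complex.exp (-Complex.I * lam * ((t : ℂ) - (s : ℂ))) • (expIA A (t - s)) (f s))
        (Set.Ioi t) volume)
    ∧ MemLp (fun t : ℝ => ∫ s in Set.Ioi t,
        Complex.exp (-Complex.I * lam * ((t : ℂ) - (s : ℂ))) • (expIA A (t - s)) (f s)) 2
        (volume.restrict (Set.Ici b))
    ∧ eLpNorm (fun t : ℝ => ∫ s in Set.Ioi t,
        Complex.exp (-Complex.I * lam * ((t : ℂ) - (s : ℂ))) • (expIA A (t - s)) (f s)) 2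
        (volume.restrict (Set.Ici b))
        ≤ ENNReal.ofReal (1 / lam.im) * eLpNorm f 2 (volume.restrict (Set.Ici b)) := by
  set c := lam.im with hc
  have hcpos : 0 < c := hlam
  set μ := volume.restrict (Set.Ici b) with hμ
  set K : ℝ → ℝ → H := fun t s =>
    Complex.exp (-Complex.I * lam * ((t : ℂ) - (s : ℂ))) • (expIA A (t - s)) (f s) with hKdef
  set u : ℝ → H := fun t => ∫ s in Set.Ioi t, K t s with hudef
  set F : ℝ → ℝ≥0∞ := fun s => (‖f s‖₊ : ℝ≥0∞) with hFdef
  set E : ℝ → ℝ → ℝ≥0∞ := fun t s => ENNReal.ofReal (Real.exp (c * (t - s))) with hEdef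
  have measF : Measurable F := hfm.enorm
  -- strong measurability of K uncurried
  have hKm : StronglyMeasurable (fun p : ℝ × ℝ => K p.1 p.2) := by
    have h1 : Continuous fun p : ℝ × ℝ =>
        Complex.exp (-Complex.I * lam * ((p.1 : ℂ) - (p.2 : ℂ))) := by continuity
    have h2 : StronglyMeasurable fun p : ℝ × ℝ => (expIA A (p.1 - p.2), f p.2) :=
      (((expIA_cont A).comp (continuous_fst.sub continuous_snd)).stronglyMeasurable).prodMk
        (hfm.comp_measurable measurable_snd)
    have h3 : StronglyMeasurable fun p : ℝ × ℝ => (expIA A (p.1 - p.2)) (f p.2) :=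
      (isBoundedBilinearMap_apply.continuous).comp_stronglyMeasurable h2
    exact h1.stronglyMeasurable.smul h3
  -- enorm of integrand
  have henorm : ∀ t s, (‖K t s‖₊ : ℝ≥0∞) = E t s * F s := by
    intro t s
    rw [← ofReal_norm_eq_coe_nnnorm, norm_integrand hA lam f t s,
      ENNReal.ofReal_mul (Real.exp_pos _).le]
    simp only [hEdef, hFdef, ofReal_norm_eq_coe_nnnorm]
    rfl
  -- integral of E over Ioi t
  have hEint : ∀ t : ℝ, ∫⁻ s in Set.Ioi t, E t s = ENNReal.ofReal (1 / c) :=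
    fun t => lint_exp_Ioi hcpos t
  -- Hölder bound for fixed t
  have hIf : (∫⁻ s in Set.Ici b, F s ^ (2 : ℝ)) < ⊤ := by
    have h2 := hf.2
    rw [eLpNorm_eq_lintegral_rpow_enorm_toReal (by norm_num) (by norm_num)] at h2
    simp only [ENNReal.toReal_ofNat] at h2
    have := (ENNReal.rpow_lt_top_iff_of_pos (by norm_num : (0:ℝ) < 1/2)).mp h2
    exact this
  have hCS : ∀ t : ℝ, (∫⁻ s in Set.Ioi t, E t s * F s) ≤
      (ENNReal.ofReal (1 / c)) ^ ((1:ℝ)/2) *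
        (∫⁻ s in Set.Ioi t, E t s * F s ^ (2 : ℝ)) ^ ((1:ℝ)/2) := by
    intro t
    set e2 : ℝ → ℝ≥0∞ := fun s => ENNReal.ofReal (Real.exp (c * (t - s) / 2)) with he2
    have he2sq : ∀ s, e2 s ^ (2:ℝ) = E t s := by
      intro s
      rw [he2, ENNReal.ofReal_rpow_of_nonneg (Real.exp_pos _).le (by norm_num : (0:ℝ) ≤ 2),
        ← Real.exp_mul]
      norm_num
      rfl
    have hsplit : ∀ s, E t s * F s = e2 s * (e2 s * F s) := by
      intro s
      rw [← mul_assoc, ← he2sq s,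
        show ((2:ℝ)) = ((2:ℕ):ℝ) from by norm_num, ENNReal.rpow_natCast]
      ring
    have hme2 : AEMeasurable e2 (volume.restrict (Set.Ioi t)) := by
      have h0 : Measurable fun s : ℝ => c * (t - s) / 2 := by fun_prop
      exact ((Real.measurable_exp.comp h0).ennreal_ofReal).aemeasurable
    have hmef : AEMeasurable (fun s => e2 s * F s) (volume.restrict (Set.Ioi t)) :=
      hme2.mul measF.aemeasurable
    calc (∫⁻ s in Set.Ioi t, E t s * F s)
        = ∫⁻ s in Set.Ioi t, e2 s * (e2 s * F s) := by
          apply lintegral_congr; intro s; rw [hsplit]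
      _ ≤ (∫⁻ s in Set.Ioi t, e2 s ^ (2:ℝ)) ^ ((1:ℝ)/2) *
            (∫⁻ s in Set.Ioi t, (e2 s * F s) ^ (2:ℝ)) ^ ((1:ℝ)/2) :=
          ENNReal.lintegral_mul_le_Lp_mul_Lq _ Real.HolderConjugate.two_two hme2 hmef
      _ = (ENNReal.ofReal (1 / c)) ^ ((1:ℝ)/2) *
            (∫⁻ s in Set.Ioi t, E t s * F s ^ (2 : ℝ)) ^ ((1:ℝ)/2) := by
          congr 1
          · rw [← hEint t]; congr 1; apply lintegral_congr; intro s; rw [he2sq]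
          · congr 1; apply lintegral_congr; intro s
            rw [ENNReal.mul_rpow_of_nonneg _ _ (by norm_num : (0:ℝ) ≤ 2), he2sq]
  have hFfin : ∀ s, F s ^ (2:ℝ) ≠ ⊤ :=
    fun s => ENNReal.rpow_ne_top_of_nonneg (by norm_num) ENNReal.coe_ne_top
  have hIci : ∀ t, b ≤ t → (∫⁻ s in Set.Ioi t, F s ^ (2:ℝ)) < ⊤ := by
    intro t ht
    exact lt_of_le_of_lt
      (lintegral_mono_set ((Set.Ioi_subset_Ici_self).trans (Set.Ici_subset_Ici.mpr ht))) hIf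
  have hEle : ∀ t s : ℝ, t ≤ s → E t s ≤ 1 := by
    intro t s h
    rw [hEdef]
    simp only
    rw [← ENNReal.ofReal_one]
    apply ENNReal.ofReal_le_ofReal
    rw [← Real.exp_zero]
    apply Real.exp_le_exp.mpr
    nlinarith
  have hT1 : ∀ t, b ≤ t → (∫⁻ s in Set.Ioi t, E t s * F s ^ (2:ℝ)) < ⊤ := by
    intro t ht
    refine lt_of_le_of_lt ?_ (hIci t ht)
    refine setLIntegral_mono' measurableSet_Ioi fun s hs => ?_
    calc E t s * F s ^ (2:ℝ) ≤ 1 * F s ^ (2:ℝ) :=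
          mul_le_mul_left (hEle t s (le_of_lt hs)) _
      _ = F s ^ (2:ℝ) := one_mul _
  -- Part 1: integrability
  have hint : ∀ t, b ≤ t → IntegrableOn (fun s => K t s) (Set.Ioi t) volume := by
    intro t ht
    refine ⟨(hKm.comp_measurable (measurable_const.prodMk measurable_id)).aestronglyMeasurable, ?_⟩
    rw [hasFiniteIntegral_iff_norm]
    have heq : ∀ s : ℝ, ENNReal.ofReal ‖K t s‖ = E t s * F s := by
      intro s; rw [ofReal_norm_eq_coe_nnnorm]; exact henorm t s
    calc ∫⁻ s in Set.Ioi t, ENNReal.ofReal ‖K t s‖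
        = ∫⁻ s in Set.Ioi t, E t s * F s := lintegral_congr heq
      _ ≤ (ENNReal.ofReal (1 / c)) ^ ((1:ℝ)/2) *
            (∫⁻ s in Set.Ioi t, E t s * F s ^ (2 : ℝ)) ^ ((1:ℝ)/2) := hCS t
      _ < ⊤ := ENNReal.mul_lt_top
          (ENNReal.rpow_lt_top_of_nonneg (by norm_num) ENNReal.ofReal_ne_top)
          (ENNReal.rpow_lt_top_of_nonneg (by norm_num) (hT1 t ht).ne)
  -- pointwise squared bound
  have hsq : ∀ t : ℝ, (‖u t‖₊ : ℝ≥0∞) ^ (2:ℝ) ≤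
      ENNReal.ofReal (1/c) * ∫⁻ s in Set.Ioi t, E t s * F s ^ (2:ℝ) := by
    intro t
    have h1 : (‖u t‖₊ : ℝ≥0∞) ≤ ∫⁻ s in Set.Ioi t, (‖K t s‖₊ : ℝ≥0∞) :=
      enorm_integral_le_lintegral_enorm _
    have h2 : (‖u t‖₊ : ℝ≥0∞) ≤ (ENNReal.ofReal (1/c)) ^ ((1:ℝ)/2) *
        (∫⁻ s in Set.Ioi t, E t s * F s ^ (2:ℝ)) ^ ((1:ℝ)/2) := by
      refine h1.trans ?_
      calc ∫⁻ s in Set.Ioi t, (‖K t s‖₊ : ℝ≥0∞)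
          = ∫⁻ s in Set.Ioi t, E t s * F s := lintegral_congr fun s => henorm t s
        _ ≤ _ := hCS t
    calc (‖u t‖₊ : ℝ≥0∞) ^ (2:ℝ)
        ≤ ((ENNReal.ofReal (1/c)) ^ ((1:ℝ)/2) *
            (∫⁻ s in Set.Ioi t, E t s * F s ^ (2:ℝ)) ^ ((1:ℝ)/2)) ^ (2:ℝ) :=
          ENNReal.rpow_le_rpow h2 (by norm_num)
      _ = ENNReal.ofReal (1/c) * ∫⁻ s in Set.Ioi t, E t s * F s ^ (2:ℝ) := by
          rw [ENNReal.mul_rpow_of_nonneg _ _ (by norm_num : (0:ℝ) ≤ 2),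
            ← ENNReal.rpow_mul, ← ENNReal.rpow_mul]
          norm_num
  -- double integral and swap
  set G : ℝ × ℝ → ℝ≥0∞ :=
    fun q => Set.indicator {q : ℝ × ℝ | q.1 < q.2} (fun q => E q.1 q.2 * F q.2 ^ (2:ℝ)) q
    with hGdef
  have hGmeas : Measurable G := by
    apply Measurable.indicator ?_ (measurableSet_lt measurable_fst measurable_snd)
    have h0 : Measurable fun q : ℝ × ℝ => c * (q.1 - q.2) := by fun_prop
    exact ((Real.measurable_exp.comp h0).ennreal_ofReal).mul
      ((measF.comp measurable_snd).pow_const _)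
  have hinner : ∀ t : ℝ, (∫⁻ s in Set.Ioi t, E t s * F s ^ (2:ℝ)) = ∫⁻ s, G (t, s) := by
    intro t
    rw [← lintegral_indicator measurableSet_Ioi]
    refine lintegral_congr fun s => ?_
    by_cases h : t < s
    · simp [hGdef, Set.indicator_apply, h]
    · simp [hGdef, Set.indicator_apply, h]
  have hswap : ∫⁻ t, (∫⁻ s, G (t, s)) ∂μ = ∫⁻ s, (∫⁻ t, G (t, s) ∂μ) :=
    lintegral_lintegral_swap ((hGmeas.comp (measurable_fst.prodMk measurable_snd)).aemeasurable)
  have houter : ∀ s : ℝ, (∫⁻ t, G (t, s) ∂μ) ≤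
      Set.indicator (Set.Ioi b) (fun s => ENNReal.ofReal (1/c) * F s ^ (2:ℝ)) s := by
    intro s
    by_cases hs : b < s
    · rw [Set.indicator_of_mem (Set.mem_Ioi.mpr hs)]
      have hGt : ∀ t : ℝ, G (t, s) = Set.indicator (Set.Iio s) (fun t => E t s * F s ^ (2:ℝ)) t := by
        intro t; by_cases h : t < s <;> simp [hGdef, Set.indicator_apply, h]
      calc ∫⁻ t, G (t, s) ∂μ
          = ∫⁻ t in Set.Iio s, E t s * F s ^ (2:ℝ) ∂μ := by
            rw [← lintegral_indicator measurableSet_Iio]; exact lintegral_congr hGt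
        _ ≤ ∫⁻ t in Set.Iio s, E t s * F s ^ (2:ℝ) := by
            rw [hμ, Measure.restrict_restrict measurableSet_Iio]
            exact lintegral_mono' (Measure.restrict_mono Set.inter_subset_left le_rfl) le_rfl
        _ = (∫⁻ t in Set.Iio s, E t s) * F s ^ (2:ℝ) :=
            lintegral_mul_const' _ _ (hFfin s)
        _ = ENNReal.ofReal (1/c) * F s ^ (2:ℝ) := by rw [lint_exp_Iio hcpos]
    · rw [Set.indicator_of_notMem (by simpa using hs)]
      refine le_of_eq ?_
      have hae : ∀ᵐ t ∂μ, G (t, s) = 0 := by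
        rw [hμ]
        filter_upwards [ae_restrict_mem measurableSet_Ici] with t ht
        have hns : ¬ t < s := not_lt.mpr (le_trans (not_lt.mp hs) ht)
        simp [hGdef, Set.indicator_apply, hns]
      rw [lintegral_congr_ae hae, lintegral_zero]
  have main : ∫⁻ t, (‖u t‖₊ : ℝ≥0∞) ^ (2:ℝ) ∂μ ≤
      ENNReal.ofReal (1/c) ^ (2:ℝ) * ∫⁻ s, F s ^ (2:ℝ) ∂μ := by
    calc ∫⁻ t, (‖u t‖₊ : ℝ≥0∞) ^ (2:ℝ) ∂μ
        ≤ ∫⁻ t, ENNReal.ofReal (1/c) * (∫⁻ s, G (t, s)) ∂μ :=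
          lintegral_mono fun t => (hsq t).trans (le_of_eq (by rw [hinner t]))
      _ = ENNReal.ofReal (1/c) * ∫⁻ t, (∫⁻ s, G (t, s)) ∂μ :=
          lintegral_const_mul' _ _ ENNReal.ofReal_ne_top
      _ = ENNReal.ofReal (1/c) * ∫⁻ s, (∫⁻ t, G (t, s) ∂μ) := by rw [hswap]
      _ ≤ ENNReal.ofReal (1/c) *
            ∫⁻ s, Set.indicator (Set.Ioi b) (fun s => ENNReal.ofReal (1/c) * F s ^ (2:ℝ)) s :=
          mul_le_mul_right (lintegral_mono houter) _
      _ = ENNReal.ofReal (1/c) * ∫⁻ s in Set.Ioi b, ENNReal.ofReal (1/c) * F s ^ (2:ℝ) := by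
          rw [lintegral_indicator measurableSet_Ioi]
      _ ≤ ENNReal.ofReal (1/c) * (ENNReal.ofReal (1/c) * ∫⁻ s in Set.Ici b, F s ^ (2:ℝ)) := by
          refine mul_le_mul_right ?_ _
          rw [lintegral_const_mul' _ _ ENNReal.ofReal_ne_top]
          exact mul_le_mul_right (lintegral_mono_set Set.Ioi_subset_Ici_self) _
      _ = ENNReal.ofReal (1/c) ^ (2:ℝ) * ∫⁻ s, F s ^ (2:ℝ) ∂μ := by
          rw [← mul_assoc, show ((2:ℝ)) = ((2:ℕ):ℝ) from by norm_num, ENNReal.rpow_natCast]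
          ring_nf
          rfl
  -- strong measurability of u
  have husm : StronglyMeasurable u := by
    have hKind : StronglyMeasurable
        (Set.indicator {q : ℝ × ℝ | q.1 < q.2} (fun q => K q.1 q.2)) :=
      hKm.indicator (measurableSet_lt measurable_fst measurable_snd)
    have higlob := hKind.integral_prod_right' (ν := (volume : Measure ℝ))
    have hue : u = fun t => ∫ s, (Set.indicator {q : ℝ × ℝ | q.1 < q.2} (fun q => K q.1 q.2)) (t, s) := by
      funext t
      rw [hudef]
      simp only
      rw [← integral_indicator measurableSet_Ioi]
      refine integral_congr_ae (Filter.Eventually.of_forall fun s => ?_)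
      by_cases h : t < s
      · simp [Set.indicator_apply, h]
      · simp [Set.indicator_apply, h]
    rw [hue]
    exact higlob
  have hfin : eLpNorm u 2 μ ≤ ENNReal.ofReal (1/c) * eLpNorm f 2 μ := by
    rw [eLpNorm_eq_lintegral_rpow_enorm_toReal (by norm_num) (by norm_num),
      eLpNorm_eq_lintegral_rpow_enorm_toReal (by norm_num) (by norm_num)]
    simp only [ENNReal.toReal_ofNat]
    refine le_trans (ENNReal.rpow_le_rpow main (by norm_num : (0:ℝ) ≤ 1/2)) (le_of_eq ?_)
    rw [ENNReal.mul_rpow_of_nonneg _ _ (by norm_num : (0:ℝ) ≤ 1/2), ← ENNReal.rpow_mul]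
    norm_num
    rfl
  have hmem : MemLp u 2 μ :=
    ⟨husm.aestronglyMeasurable,
      lt_of_le_of_lt hfin (ENNReal.mul_lt_top ENNReal.ofReal_lt_top hf.2)⟩
  exact ⟨hint, hmem, hfin⟩


/-- For `Im λ > 0` and `f ∈ L²([b, ∞); H)`, for a.e. `t ≥ b` the integrand
`s ↦ e^{−iλ(t−s)} exp(i(t−s)A) f(s)` is Bochner integrable on `(t, ∞)`, and
`u(t) = ∫_t^∞ e^{−iλ(t−s)} exp(i(t−s)A) f(s) ds` lies in `L²([b, ∞); H)` with
`‖u‖ ≤ (1/Im λ) ‖f‖`. -/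
theorem volterra_bound_right_halfline_upper
    {H : Type*} [NormedAddCommGroup H] [InnerProductSpace ℂ H] [CompleteSpace H]
    (A : H →L[ℂ] H) (hA : IsSelfAdjoint A) (b : ℝ) (lam : ℂ) (hlam : 0 < lam.im)
    (f : ℝ → H) (hf : MemLp f 2 (volume.restrict (Set.Ici b)))
    (u : ℝ → H)
    (hu : u = fun t : ℝ => ∫ s in Set.Ioi t,
      Complex.exp (-Complex.I * lam * ((t : ℂ) - (s : ℂ))) • (expIA A (t - s)) (f s)) :
    (∀ᵐ (t : ℝ) ∂(volume.restrict (Set.Ici b)),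
      IntegrableOn (fun s : ℝ =>
        Complex.exp (-Complex.I * lam * ((t : ℂ) - (s : ℂ))) • (expIA A (t - s)) (f s))
        (Set.Ioi t) volume)
    ∧ MemLp u 2 (volume.restrict (Set.Ici b))
    ∧ eLpNorm u 2 (volume.restrict (Set.Ici b))
        ≤ ENNReal.ofReal (1 / lam.im) * eLpNorm f 2 (volume.restrict (Set.Ici b)) := by
  subst hu
  obtain ⟨g, hgm, hfg⟩ := hf.aestronglyMeasurable
  have hg : MemLp g 2 (volume.restrict (Set.Ici b)) := hf.ae_eq hfg
  obtain ⟨hint, hmem, hbound⟩ := key A hA b lam hlam g hgm hg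
  have hnull : volume ({x | f x ≠ g x} ∩ Set.Ici b) = 0 := by
    have h0 := hfg
    rw [Filter.EventuallyEq, ae_iff] at h0
    rwa [Measure.restrict_apply' measurableSet_Ici] at h0
  have hres : ∀ t : ℝ, b ≤ t → f =ᵐ[volume.restrict (Set.Ioi t)] g := by
    intro t ht
    rw [Filter.EventuallyEq, ae_iff, Measure.restrict_apply' measurableSet_Ioi]
    refine measure_mono_null (fun x hx => ?_) hnull
    exact ⟨hx.1, le_trans ht (le_of_lt hx.2)⟩
  have hKeq : ∀ t : ℝ, b ≤ t →
      (fun s : ℝ => Complex.exp (-Complex.I * lam * ((t : ℂ) - (s : ℂ))) •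
        (expIA A (t - s)) (f s)) =ᵐ[volume.restrict (Set.Ioi t)]
      (fun s : ℝ => Complex.exp (-Complex.I * lam * ((t : ℂ) - (s : ℂ))) •
        (expIA A (t - s)) (g s)) := by
    intro t ht
    filter_upwards [hres t ht] with s hs
    rw [hs]
  have hueq : (fun t : ℝ => ∫ s in Set.Ioi t,
      Complex.exp (-Complex.I * lam * ((t : ℂ) - (s : ℂ))) • (expIA A (t - s)) (f s))
      =ᵐ[volume.restrict (Set.Ici b)]
      (fun t : ℝ => ∫ s in Set.Ioi t,
      Complex.exp (-Complex.I * lam * ((t : ℂ) - (s : ℂ))) • (expIA A (t - s)) (g s)) := by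
    filter_upwards [ae_restrict_mem measurableSet_Ici] with t ht
    exact integral_congr_ae (hKeq t ht)
  refine ⟨?_, ?_, ?_⟩
  · filter_upwards [ae_restrict_mem measurableSet_Ici] with t ht
    exact (hint t ht).congr (hKeq t ht).symm
  · exact hmem.ae_eq hueq.symm
  · rw [eLpNorm_congr_ae hueq, eLpNorm_congr_ae hfg]
    exact hbound
end

section
/- Let λ ∈ ℂ with λ_i = Im λ < 0 and f ∈ L²((-∞, a]; H). Then the function s ↦ e^{−iλ(a−s)} exp(i(a−s)A) f(s) is Bochner integrable on (-∞, a), and ‖ ∫_{-∞}^a e^{−iλ(a−s)} exp(i(a−s)A) f(s) ds ‖² ≤ (1/(2|λ_i|)) ∫_{-∞}^a ‖f(s)‖² ds. -/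
open MeasureTheory Set Complex
open scoped InnerProductSpace

lemma exp_mul_Iic {b c : ℝ} (hb : 0 < b) :
    IntegrableOn (fun x => Real.exp (b * x)) (Iic c) volume ∧
      ∫ x in Iic c, Real.exp (b * x) = Real.exp (b * c) / b := by
  have key : ∀ y : ℝ, ∫ x in y..c, Real.exp (b * x)
      = (Real.exp (b * c) - Real.exp (b * y)) / b := by
    intro y
    rw [intervalIntegral.integral_comp_mul_left (fun x => Real.exp x) hb.ne']
    rw [integral_exp]
    rw [smul_eq_mul]
    ring
  have hint : IntegrableOn (fun x => Real.exp (b * x)) (Iic c) volume := by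
    refine integrableOn_Iic_of_intervalIntegral_norm_bounded
      (Real.exp (b * c) / b) c (fun y => ?_) Filter.tendsto_id
      (Filter.Eventually.of_forall fun y => ?_)
    · exact (by fun_prop : Continuous fun x : ℝ => Real.exp (b * x)).integrableOn_Ioc
    · simp_rw [Real.norm_of_nonneg (Real.exp_pos _).le, key]
      gcongr
      linarith [(Real.exp_pos (b * id y)).le]
  refine ⟨hint, ?_⟩
  refine tendsto_nhds_unique
    (intervalIntegral_tendsto_integral_Iic _ hint Filter.tendsto_id) ?_
  simp_rw [key]
  have : Filter.Tendsto (fun y : ℝ => Real.exp (b * y)) Filter.atBot (nhds 0) :=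
    Real.tendsto_exp_atBot.comp (Filter.tendsto_id.const_mul_atBot hb)
  simpa using ((tendsto_const_nhds.sub this).div_const b)


set_option synthInstance.maxHeartbeats 1000000 in
/-- For `Im λ < 0` and `f ∈ L²((-∞, a]; H)`, the function
`s ↦ e^{−iλ(a−s)} exp(i(a−s)A) f(s)` is Bochner integrable on `(-∞, a)` and
`‖∫_{-∞}^a e^{−iλ(a−s)} exp(i(a−s)A) f(s) ds‖² ≤ (1/(2|Im λ|)) ∫_{-∞}^a ‖f(s)‖² ds`. -/
theorem integral_bound_left_halfline
    {H : Type*} [NormedAddCommGroup H] [InnerProductSpace ℂ H] [CompleteSpace H]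
    (A : H →L[ℂ] H) (hA : IsSelfAdjoint A) (a : ℝ) (lam : ℂ) (hlam : lam.im < 0)
    (f : ℝ → H) (hf : MemLp f 2 (volume.restrict (Set.Iic a))) :
    IntegrableOn
      (fun s : ℝ => Complex.exp (-Complex.I * lam * ((a : ℂ) - (s : ℂ))) •
        (expIA A (a - s)) (f s)) (Set.Iio a) volume
    ∧ ‖∫ s in Set.Iio a, Complex.exp (-Complex.I * lam * ((a : ℂ) - (s : ℂ))) •
          (expIA A (a - s)) (f s)‖ ^ 2
        ≤ (1 / (2 * |lam.im|)) * ∫ s in Set.Iio a, ‖f s‖ ^ 2 := by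
  have hc : 0 < -lam.im := by linarith
  have hb : 0 < -(2 * lam.im) := by linarith
  have hf2 : MemLp f 2 (volume.restrict (Iio a)) :=
    hf.mono_measure (Measure.restrict_mono Iio_subset_Iic_self le_rfl)
  set g : ℝ → ℝ := fun s => Real.exp (lam.im * (a - s)) with hg_def
  have hg_cont : Continuous g := by fun_prop
  have hres : volume.restrict (Iio a) = volume.restrict (Iic a) :=
    Measure.restrict_congr_set Iio_ae_eq_Iic
  -- integral of g^2
  have hgsq : ∀ s : ℝ, g s ^ 2
      = Real.exp (2 * lam.im * a) * Real.exp (-(2 * lam.im) * s) := by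
    intro s
    rw [hg_def, sq, ← Real.exp_add, ← Real.exp_add]
    congr 1
    ring
  have hIg_int : Integrable (fun s => g s ^ 2) (volume.restrict (Iio a)) := by
    rw [hres]
    simp_rw [hgsq]
    exact ((exp_mul_Iic (c := a) hb).1).const_mul _
  have hIg_val : ∫ s in Iio a, g s ^ 2 = 1 / (2 * -lam.im) := by
    rw [show (∫ s in Iio a, g s ^ 2) = ∫ s in Iic a, g s ^ 2 by rw [hres]]
    simp_rw [hgsq]
    rw [MeasureTheory.integral_const_mul, (exp_mul_Iic (c := a) hb).2,
      mul_div_assoc', ← Real.exp_add]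
    rw [show 2 * lam.im * a + -(2 * lam.im) * a = 0 by ring, Real.exp_zero]
    rw [show -(2 * lam.im) = 2 * -lam.im by ring]
  have hg2mem : MemLp g 2 (volume.restrict (Iio a)) :=
    (memLp_two_iff_integrable_sq hg_cont.aestronglyMeasurable).mpr hIg_int
  -- pointwise norm
  have hnorm : ∀ s : ℝ,
      ‖Complex.exp (-Complex.I * lam * ((a : ℂ) - (s : ℂ))) •
        (expIA A (a - s)) (f s)‖ = g s * ‖f s‖ := by
    intro s
    rw [norm_smul, expIA_norm_apply A hA, Complex.norm_exp]
    congr 2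
    simp [Complex.mul_re, Complex.mul_im]
  -- measurability
  have hLcont : Continuous fun s : ℝ => expIA A (a - s) := by
    have h1 : Continuous fun s : ℝ => (Complex.I * ((a - s : ℝ) : ℂ)) • A := by fun_prop
    letI : NormedAlgebra ℚ (H →L[ℂ] H) := NormedAlgebra.restrictScalars ℚ ℂ _
    exact NormedSpace.exp_continuous.comp h1
  have hFm : AEStronglyMeasurable
      (fun s : ℝ => Complex.exp (-Complex.I * lam * ((a : ℂ) - (s : ℂ))) •
        (expIA A (a - s)) (f s)) (volume.restrict (Iio a)) := by
    apply AEStronglyMeasurable.smul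
    · exact (Complex.continuous_exp.comp (by fun_prop)).aestronglyMeasurable
    · exact (ContinuousLinearMap.id ℂ (H →L[ℂ] H)).aestronglyMeasurable_comp₂
        hLcont.aestronglyMeasurable hf2.1
  -- integrable bound
  have hgf_int : Integrable (fun s => g s * ‖f s‖) (volume.restrict (Iio a)) := by
    have hmem : MemLp (g • fun s => ‖f s‖) 1 (volume.restrict (Iio a)) :=
      (hf2.norm).smul (r := 1) hg2mem
    exact memLp_one_iff_integrable.mp (by simpa [Pi.smul_apply, smul_eq_mul, Pi.mul_def] using hmem)
  have hInt : IntegrableOn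
      (fun s : ℝ => Complex.exp (-Complex.I * lam * ((a : ℂ) - (s : ℂ))) •
        (expIA A (a - s)) (f s)) (Iio a) volume :=
    hgf_int.mono' hFm (Filter.Eventually.of_forall fun s => (hnorm s).le)
  refine ⟨hInt, ?_⟩
  have h1 : ‖∫ s in Iio a, Complex.exp (-Complex.I * lam * ((a : ℂ) - (s : ℂ))) •
      (expIA A (a - s)) (f s)‖ ≤ ∫ s in Iio a, g s * ‖f s‖ := by
    refine (norm_integral_le_integral_norm _).trans_eq ?_
    exact integral_congr_ae (Filter.Eventually.of_forall hnorm)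
  have hconj : Real.HolderConjugate 2 2 := by rw [Real.holderConjugate_iff]; norm_num
  have h2 : ∫ s in Iio a, g s * ‖f s‖
      ≤ (∫ s in Iio a, g s ^ (2 : ℝ)) ^ (1 / 2 : ℝ)
        * (∫ s in Iio a, ‖f s‖ ^ (2 : ℝ)) ^ (1 / 2 : ℝ) := by
    refine integral_mul_le_Lp_mul_Lq_of_nonneg hconj
      (Filter.Eventually.of_forall fun s => (Real.exp_pos _).le)
      (Filter.Eventually.of_forall fun s => norm_nonneg _) ?_ ?_
    · simpa [ENNReal.ofReal_ofNat] using hg2mem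
    · simpa [ENNReal.ofReal_ofNat] using hf2.norm
  have hcast : ∀ x : ℝ, x ^ (2 : ℝ) = x ^ 2 := fun x => by
    rw [show (2 : ℝ) = ((2 : ℕ) : ℝ) by norm_num, Real.rpow_natCast]
  simp_rw [hcast] at h2
  have hIg_nonneg : (0 : ℝ) ≤ ∫ s in Iio a, g s ^ 2 :=
    integral_nonneg fun s => by positivity
  have hIf_nonneg : (0 : ℝ) ≤ ∫ s in Iio a, ‖f s‖ ^ 2 :=
    integral_nonneg fun s => by positivity
  have key := pow_le_pow_left₀ (norm_nonneg _) (h1.trans h2) 2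
  calc ‖∫ s in Iio a, Complex.exp (-Complex.I * lam * ((a : ℂ) - (s : ℂ))) •
      (expIA A (a - s)) (f s)‖ ^ 2
      ≤ ((∫ s in Iio a, g s ^ 2) ^ (1 / 2 : ℝ)
        * (∫ s in Iio a, ‖f s‖ ^ 2) ^ (1 / 2 : ℝ)) ^ 2 := key
    _ = (∫ s in Iio a, g s ^ 2) * ∫ s in Iio a, ‖f s‖ ^ 2 := by
        rw [mul_pow, ← Real.rpow_natCast ((∫ s in Iio a, g s ^ 2) ^ (1 / 2 : ℝ)) 2,
          ← Real.rpow_natCast ((∫ s in Iio a, ‖f s‖ ^ 2) ^ (1 / 2 : ℝ)) 2,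
          ← Real.rpow_mul hIg_nonneg, ← Real.rpow_mul hIf_nonneg]
        norm_num
    _ ≤ (1 / (2 * |lam.im|)) * ∫ s in Iio a, ‖f s‖ ^ 2 := by
        rw [hIg_val, abs_of_neg hlam]
end

section
/- Let λ ∈ ℂ with λ_i = Im λ < 0, and let f : ℝ → H be continuous on (-∞, a] with ∫_{-∞}^a ‖f(s)‖² ds < ∞. Then the function u(t) = −i ∫_{-∞}^t e^{−iλ(t−s)} exp(i(t−s)A) f(s) ds is well defined and differentiable on (-∞, a] and satisfies i u'(t) + A u(t) = λ u(t) + f(t) for every t ≤ a; i.e., u solves the resolvent equation on the half-line (-∞, a] (part of the proof of Theorem 3.2). -/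
open MeasureTheory Set Complex
open scoped InnerProductSpace

section Aux
variable {H : Type*} [NormedAddCommGroup H] [InnerProductSpace ℂ H] [CompleteSpace H]
variable (A : H →L[ℂ] H)

noncomputable instance instNormedAlgebraRatCLMAux : NormedAlgebra ℚ (H →L[ℂ] H) :=
  NormedAlgebra.restrictScalars ℚ ℂ _

lemma expIA_add (σ τ : ℝ) : expIA A (σ + τ) = expIA A σ * expIA A τ := by
  rw [expIA, expIA, expIA, ← NormedSpace.exp_add_of_commute
    (((Commute.refl A).smul_right (Complex.I * (τ:ℂ))).smul_left (Complex.I * (σ:ℂ)))]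
  congr 1
  rw [← add_smul]
  congr 1
  push_cast
  ring

lemma expIA_zero : expIA A 0 = 1 := by
  simp [expIA, NormedSpace.exp_zero]

lemma expIA_apply_neg (τ : ℝ) (x : H) : expIA A τ (expIA A (-τ) x) = x := by
  have h : expIA A τ * expIA A (-τ) = 1 := by
    rw [← expIA_add]; simp [expIA_zero]
  rw [← ContinuousLinearMap.mul_apply, h, ContinuousLinearMap.one_apply]

lemma expIA_star (hA : IsSelfAdjoint A) (τ : ℝ) : star (expIA A τ) = expIA A (-τ) := by
  rw [expIA, expIA, NormedSpace.star_exp]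
  congr 1
  rw [star_smul, hA.star_eq]
  congr 1
  simp [Complex.conj_I]

lemma norm_expIA_apply (hA : IsSelfAdjoint A) (τ : ℝ) (x : H) : ‖expIA A τ x‖ = ‖x‖ := by
  have h1 : ContinuousLinearMap.adjoint (expIA A τ) = expIA A (-τ) := by
    rw [← ContinuousLinearMap.star_eq_adjoint, expIA_star A hA]
  have h2 : ⟪expIA A τ x, expIA A τ x⟫_ℂ = ⟪x, x⟫_ℂ := by
    calc ⟪expIA A τ x, expIA A τ x⟫_ℂ
        = ⟪ContinuousLinearMap.adjoint (expIA A τ) (expIA A τ x), x⟫_ℂ :=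
          (ContinuousLinearMap.adjoint_inner_left _ _ _).symm
      _ = ⟪x, x⟫_ℂ := by
          rw [h1]
          congr 1
          have := expIA_apply_neg A (-τ) x
          simpa using this
  rw [@inner_self_eq_norm_sq_to_K ℂ, @inner_self_eq_norm_sq_to_K ℂ] at h2
  have h4 : ‖expIA A τ x‖ ^ 2 = ‖x‖ ^ 2 := by exact_mod_cast h2
  have := congrArg Real.sqrt h4
  rwa [Real.sqrt_sq (norm_nonneg _), Real.sqrt_sq (norm_nonneg _)] at this

lemma continuous_expIA : Continuous (fun τ : ℝ => expIA A τ) := by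
  apply NormedSpace.exp_continuous.comp
  continuity

lemma hasDerivAt_expIA (t : ℝ) :
    HasDerivAt (fun τ : ℝ => expIA A τ) (Complex.I • (A * expIA A t)) t := by
  have h1 : HasDerivAt (fun z : ℂ => NormedSpace.exp (z • A))
      (A * NormedSpace.exp ((Complex.I * (t:ℂ)) • A)) (Complex.I * (t:ℂ)) :=
    hasDerivAt_exp_smul_const' A (Complex.I * (t:ℂ))
  have h2 : HasDerivAt (fun τ : ℝ => Complex.I * (τ:ℂ)) Complex.I t := by
    simpa using ((hasDerivAt_id ((t:ℂ))).const_mul Complex.I).comp_ofReal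
  have := HasDerivAt.scomp (x := t) h1 h2
  simpa [Function.comp_def, expIA] using this

lemma hasDerivAt_cexp_mul (μ : ℂ) (t : ℝ) :
    HasDerivAt (fun s : ℝ => Complex.exp (μ * s)) (μ * Complex.exp (μ * t)) t := by
  have h : HasDerivAt (fun z : ℂ => Complex.exp (μ * z)) (μ * Complex.exp (μ * t)) (t : ℂ) := by
    have := ((hasDerivAt_id ((t:ℂ))).const_mul μ).cexp
    simpa [mul_comm] using this
  exact h.comp_ofReal

end Aux

/-- For `Im λ < 0` and `f` continuous on `(-∞, a]` with `∫_{-∞}^a ‖f‖² < ∞`, the function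
`u(t) = −i ∫_{-∞}^t e^{−iλ(t−s)} exp(i(t−s)A) f(s) ds` is well defined and differentiable
on `(-∞, a]` and solves `i u' + A u = λ u + f` there (part of the proof of Theorem 3.2). -/
theorem resolvent_solution_left_halfline
    {H : Type*} [NormedAddCommGroup H] [InnerProductSpace ℂ H] [CompleteSpace H]
    (A : H →L[ℂ] H) (hA : IsSelfAdjoint A) (a : ℝ) (lam : ℂ) (hlam : lam.im < 0)
    (f : ℝ → H) (hfc : ContinuousOn f (Set.Iic a))
    (hfL2 : IntegrableOn (fun s : ℝ => ‖f s‖ ^ 2) (Set.Iic a) volume)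
    (u : ℝ → H)
    (hu : u = fun t : ℝ => (-Complex.I) • ∫ s in Set.Iio t,
      Complex.exp (-Complex.I * lam * ((t : ℂ) - (s : ℂ))) • (expIA A (t - s)) (f s)) :
    (∀ t ∈ Set.Iic a,
      IntegrableOn (fun s : ℝ =>
        Complex.exp (-Complex.I * lam * ((t : ℂ) - (s : ℂ))) • (expIA A (t - s)) (f s))
        (Set.Iio t) volume)
    ∧ ∃ u' : ℝ → H, ∀ t ∈ Set.Iic a,
        HasDerivWithinAt u (u' t) (Set.Iic a) t
        ∧ Complex.I • u' t + A (u t) = lam • u t + f t := by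
  set g : ℝ → H := fun s => Complex.exp (Complex.I * lam * s) • (expIA A (-s)) (f s) with hg
  have hEcont : Continuous (fun s : ℝ => expIA A (-s)) :=
    (continuous_expIA A).comp continuous_neg
  have hgc : ContinuousOn g (Iic a) := by
    apply ContinuousOn.smul
    · exact (Complex.continuous_exp.comp (by continuity)).continuousOn
    · exact hEcont.continuousOn.clm_apply hfc
  have hre : ∀ (μ : ℂ) (s : ℝ), (μ * s).re = μ.re * s := by
    intro μ s; simp [Complex.mul_re]
  have hnorm_g : ∀ s : ℝ, ‖g s‖ = Real.exp (-lam.im * s) * ‖f s‖ := by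
    intro s
    rw [hg]
    simp only []
    rw [norm_smul, norm_expIA_apply A hA]
    congr 1
    rw [Complex.norm_exp, hre]
    congr 1
    simp [Complex.mul_re]
  -- integrability of the exponential weight
  have hexp_int : IntegrableOn (fun s : ℝ => Real.exp (-2 * lam.im * s)) (Iic a) volume := by
    have hb : (0:ℝ) < -2 * lam.im := by linarith
    have h1 : IntegrableOn (fun x : ℝ => Real.exp (-(-2 * lam.im) * x)) (Ioi (-a)) volume :=
      exp_neg_integrableOn_Ioi _ hb
    have h2 : IntegrableOn ((fun x : ℝ => Real.exp (-2 * lam.im * x)) ∘ Neg.neg)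
        (Neg.neg ⁻¹' (Iic a)) volume := by
      have hpre : (Neg.neg ⁻¹' (Iic a) : Set ℝ) = Ici (-a) := by
        ext x; simp [neg_le]
      rw [hpre, integrableOn_Ici_iff_integrableOn_Ioi]
      refine h1.congr_fun ?_ measurableSet_Ioi
      intro x _
      simp only [Function.comp_apply]
      congr 1
      ring
    exact ((Measure.measurePreserving_neg (volume : Measure ℝ)).integrableOn_comp_preimage
      (Homeomorph.neg ℝ).measurableEmbedding).mp h2
  -- integrability of g on (-∞, a]
  have hgint : IntegrableOn g (Iic a) volume := by
    rw [IntegrableOn, ← memLp_one_iff_integrable]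
    have hφm : AEStronglyMeasurable (fun s : ℝ => Complex.exp (Complex.I * lam * s))
        (volume.restrict (Iic a)) := by
      apply Continuous.aestronglyMeasurable
      continuity
    have hφ : MemLp (fun s : ℝ => Complex.exp (Complex.I * lam * s)) 2
        (volume.restrict (Iic a)) := by
      rw [memLp_two_iff_integrable_sq_norm hφm]
      refine hexp_int.congr_fun ?_ measurableSet_Iic
      intro s _
      show Real.exp (-2 * lam.im * s) = ‖Complex.exp (Complex.I * lam * s)‖ ^ 2
      rw [Complex.norm_exp, hre]
      rw [pow_two, ← Real.exp_add]
      congr 1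
      simp [Complex.mul_re]
      ring
    have hv : MemLp (fun s : ℝ => (expIA A (-s)) (f s)) 2 (volume.restrict (Iic a)) := by
      rw [memLp_two_iff_integrable_sq_norm
        ((hEcont.continuousOn.clm_apply hfc).aestronglyMeasurable measurableSet_Iic)]
      refine hfL2.congr_fun ?_ measurableSet_Iic
      intro s _
      simp [norm_expIA_apply A hA]
    have h12 : (1 : ENNReal) / 1 = 1 / 2 + 1 / 2 := by
      simp only [one_div, inv_one]
      exact ENNReal.inv_two_add_inv_two.symm
    exact hv.smul (r := 1) hφ (hpqr := ⟨by simp only [inv_one]; exact ENNReal.inv_two_add_inv_two⟩)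
  have hIio : ∀ t : ℝ, t ≤ a → IntegrableOn g (Iio t) volume := fun t ht =>
    hgint.mono_set fun s hs => le_of_lt (lt_of_lt_of_le hs ht)
  -- rewriting the integrand
  have hrw : ∀ t : ℝ, (fun s : ℝ => Complex.exp (-Complex.I * lam * ((t:ℂ) - (s:ℂ))) •
      (expIA A (t - s)) (f s))
      = fun s : ℝ => Complex.exp (-Complex.I * lam * t) • (expIA A t) (g s) := by
    intro t; funext s
    rw [hg]
    simp only []
    rw [_root_.map_smul, smul_smul, ← Complex.exp_add]
    rw [show t - s = t + (-s) by ring, expIA_add, ContinuousLinearMap.mul_apply]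
    congr 2
    push_cast
    ring
  have hmain1 : ∀ t ∈ Iic a, IntegrableOn (fun s : ℝ =>
      Complex.exp (-Complex.I * lam * ((t:ℂ) - (s:ℂ))) • (expIA A (t - s)) (f s))
      (Iio t) volume := by
    intro t ht
    rw [hrw t]
    exact Integrable.smul _ ((expIA A t).integrable_comp (hIio t ht))
  refine ⟨hmain1, ?_⟩
  set F : ℝ → H := fun t => ∫ s in Iio t, g s with hF
  have hFsplit : ∀ t : ℝ, t ≤ a → F t = (∫ s in Iic a, g s) + ∫ s in a..t, g s := by
    intro t ht
    have hdisj : Disjoint (Iio t) (Icc t a) := by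
      apply Set.disjoint_left.mpr
      intro x hx hx2
      exact absurd hx2.1 (not_le.mpr hx)
    have heq := setIntegral_union hdisj measurableSet_Icc (hIio t ht)
      (hgint.mono_set Icc_subset_Iic_self) (f := g) (μ := volume)
    rw [Iio_union_Icc_eq_Iic ht] at heq
    have hIcc : ∫ s in Icc t a, g s = ∫ s in t..a, g s := by
      rw [intervalIntegral.integral_of_le ht, integral_Icc_eq_integral_Ioc]
    rw [intervalIntegral.integral_symm, ← hIcc, heq]
    abel
  have hFd : ∀ t ∈ Iic a, HasDerivWithinAt F (g t) (Iic a) t := by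
    intro t ht
    have hii : IntervalIntegrable g volume a t := by
      rw [intervalIntegrable_iff]
      apply hgint.mono_set
      rw [Set.uIoc_of_ge ht]
      exact Ioc_subset_Iic_self
    have hD : HasDerivWithinAt (fun t' : ℝ => ∫ s in a..t', g s) (g t) (Iic a) t := by
      rcases eq_or_lt_of_le (mem_Iic.mp ht) with rfl | ht'
      · exact intervalIntegral.integral_hasDerivWithinAt_right hii
          ⟨Iic t, self_mem_nhdsWithin, hgc.aestronglyMeasurable measurableSet_Iic⟩
          (hgc t (by simp))
      · exact (intervalIntegral.integral_hasDerivAt_right hii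
          ⟨Iic a, Iic_mem_nhds ht', hgc.aestronglyMeasurable measurableSet_Iic⟩
          (hgc.continuousAt (Iic_mem_nhds ht'))).hasDerivWithinAt
    have hD2 := hD.const_add (∫ s in Iic a, g s)
    exact hD2.congr (fun y hy => hFsplit y hy) (hFsplit t ht)
  set c : ℝ → ℂ := fun t => -Complex.I * Complex.exp (-Complex.I * lam * t) with hc
  set M : ℝ → (H →L[ℂ] H) := fun t => c t • expIA A t with hM
  have hueq : ∀ t ∈ Iic a, u t = M t (F t) := by
    intro t ht
    rw [hu]
    simp only []
    rw [hrw t, integral_smul, ContinuousLinearMap.integral_comp_comm _ (hIio t ht)]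
    rw [hM]
    simp only [ContinuousLinearMap.smul_apply]
    rw [smul_smul, hc]
  have hcd : ∀ t : ℝ, HasDerivAt c ((-Complex.I * lam) * c t) t := by
    intro t
    have h := (hasDerivAt_cexp_mul (-Complex.I * lam) t).const_mul (-Complex.I)
    rw [hc]
    refine h.congr_deriv ?_
    beta_reduce
    ring
  have hVd : ∀ t ∈ Iic a, HasDerivWithinAt (fun y : ℝ => (expIA A y) (F y))
      ((Complex.I • (A * expIA A t)) (F t) + (expIA A t) (g t)) (Iic a) t := by
    intro t ht
    have hE : HasDerivAt
        (fun y : ℝ => (ContinuousLinearMap.restrictScalarsL ℂ H H ℝ ℝ) (expIA A y))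
        ((ContinuousLinearMap.restrictScalarsL ℂ H H ℝ ℝ) (Complex.I • (A * expIA A t))) t :=
      (ContinuousLinearMap.restrictScalarsL ℂ H H ℝ ℝ).hasFDerivAt.comp_hasDerivAt t
        (hasDerivAt_expIA A t)
    have h2 := (hE.hasDerivWithinAt (s := Iic a)).clm_apply (hFd t ht)
    simpa using h2
  refine ⟨fun t => (-Complex.I * lam) • u t + Complex.I • A (u t) + (-Complex.I) • f t, ?_⟩
  intro t ht
  have hEg : expIA A t (g t) = Complex.exp (Complex.I * lam * t) • f t := by
    rw [hg]
    simp only []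
    rw [_root_.map_smul, expIA_apply_neg]
  have hcc : c t • (Complex.exp (Complex.I * lam * t) • f t) = (-Complex.I) • f t := by
    rw [smul_smul, hc]
    simp only []
    rw [mul_assoc, ← Complex.exp_add]
    norm_num
  constructor
  · have hueq' : ∀ y ∈ Iic a, u y = c y • (expIA A y) (F y) := by
      intro y hy
      rw [hueq y hy, hM]
      simp [ContinuousLinearMap.smul_apply]
    have hwd := ((hcd t).hasDerivWithinAt (s := Iic a)).smul (hVd t ht)
    have hwd2 := hwd.congr hueq' (hueq' t ht)
    convert hwd2 using 1
    simp only []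
    rw [hueq' t ht]
    simp only [ContinuousLinearMap.smul_apply, ContinuousLinearMap.mul_apply, _root_.map_smul]
    rw [hEg, smul_add, hcc]
    module
  · have hs1 : Complex.I * (-Complex.I * lam) = lam := by
      rw [neg_mul, mul_neg, ← mul_assoc, Complex.I_mul_I]; ring
    have hs3 : Complex.I * -Complex.I = 1 := by
      rw [mul_neg, Complex.I_mul_I]; ring
    simp only [smul_add, smul_smul, hs1, hs3, one_smul, Complex.I_mul_I, neg_one_smul]
    abel
end
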